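/- In the public outcomes model, if outcome o has group harm ratio 1 (1-GHR), then for every outcome o', (∏_i u_i(o))^{1/n} ≥ C(n,⌊n/2⌋)^{−1/n} · (∏_i u_i(o'))^{1/n}, where C(n,k) is the binomial coefficient. In particular, since C(n,⌊n/2⌋)^{1/n} ≤ 2, the Nash welfare of o is at least half the maximum Nash welfare. -/

import Mathlib

open Finset

private lemma prod_key_ghr {n : ℕ} (uo uo' : Fin n → ℝ) (h0 : ∀ i, 0 ≤ uo i)
    (h0' : ∀ i, 0 ≤ uo' i) (m : ℕ) (L : Finset (Fin n))
    (hKey : ∀ S : Finset (Fin n), S ⊆ L → S.Nonempty →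
      ∃ j ∈ S, ((S.card : ℝ) / (m + S.card)) * uo' j ≤ uo j) :
    ∀ S : Finset (Fin n), S ⊆ L →
      ((S.card.factorial * m.factorial : ℝ) / (m + S.card).factorial) * ∏ i ∈ S, uo' i
        ≤ ∏ i ∈ S, uo i := by
  intro S
  induction S using Finset.strongInduction with
  | _ S ih =>
    intro hSL
    rcases S.eq_empty_or_nonempty with rfl | hSne
    · simp only [Finset.card_empty, Nat.factorial_zero, Nat.cast_one, one_mul, add_zero,
        Finset.prod_empty, mul_one]
      exact le_of_eq (div_self (by exact_mod_cast (Nat.factorial_pos m).ne'))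
    · obtain ⟨j, hjS, hj⟩ := hKey S hSL hSne
      have hIH := ih (S.erase j) (Finset.erase_ssubset hjS)
        ((Finset.erase_subset _ _).trans hSL)
      set s' := (S.erase j).card with hs'
      have hcard : S.card = s' + 1 := by
        rw [hs', Finset.card_erase_of_mem hjS]
        have := Finset.card_pos.mpr hSne
        omega
      have hprod' : ∏ i ∈ S, uo' i = uo' j * ∏ i ∈ S.erase j, uo' i :=
        (Finset.mul_prod_erase S uo' hjS).symm
      have hprod : ∏ i ∈ S, uo i = uo j * ∏ i ∈ S.erase j, uo i :=
        (Finset.mul_prod_erase S uo hjS).symm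
      have hfp : (0:ℝ) < ((m + s').factorial : ℝ) := by
        exact_mod_cast Nat.factorial_pos _
      have hc : ((S.card.factorial * m.factorial : ℝ) / (m + S.card).factorial)
          = ((S.card : ℝ) / (m + S.card))
            * ((s'.factorial * m.factorial : ℝ) / (m + s').factorial) := by
        rw [hcard]
        have h1 : (s' + 1).factorial = (s' + 1) * s'.factorial := Nat.factorial_succ s'
        have h2 : (m + (s' + 1)).factorial = (m + s' + 1) * (m + s').factorial := by
          rw [← add_assoc, Nat.factorial_succ]
        rw [h1, h2]
        push_cast
        field_simp
        ring
      have hnn : (0:ℝ) ≤ ((s'.factorial * m.factorial : ℝ) / (m + s').factorial)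
          * ∏ i ∈ S.erase j, uo' i := by
        apply mul_nonneg
        · positivity
        · exact Finset.prod_nonneg fun i _ => h0' i
      calc ((S.card.factorial * m.factorial : ℝ) / (m + S.card).factorial) * ∏ i ∈ S, uo' i
          = (((S.card : ℝ) / (m + S.card)) * uo' j)
            * (((s'.factorial * m.factorial : ℝ) / (m + s').factorial)
              * ∏ i ∈ S.erase j, uo' i) := by rw [hprod', hc]; ring
        _ ≤ uo j * ∏ i ∈ S.erase j, uo i := mul_le_mul hj hIH hnn (h0 j)
        _ = ∏ i ∈ S, uo i := hprod.symm

theorem ghr_one_implies_nw_approx {O : Type*} {n : ℕ} (hn : 0 < n)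
    (u : Fin n → O → ℝ) (hu : ∀ i o, 0 ≤ u i o)
    (o : O)
    (hGHR : ¬ ∃ (S T : Finset (Fin n)) (o' : O), S.Nonempty ∧ T.Nonempty ∧
        (∀ i ∈ S, ((S.card : ℝ) / (S ∪ T).card) * u i o' ≥ u i o) ∧
        (∃ i ∈ S, ((S.card : ℝ) / (S ∪ T).card) * u i o' > u i o) ∧
        (∀ i ∉ S ∪ T, u i o' ≥ u i o)) :
    ∀ o' : O,
      (∏ i, u i o) ^ ((1 : ℝ) / n) ≥
        ((n.choose (n / 2) : ℝ)) ^ (-(1 : ℝ) / n) * (∏ i, u i o') ^ ((1 : ℝ) / n) ∧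
      (∏ i, u i o) ^ ((1 : ℝ) / n) ≥ (1 / 2 : ℝ) * (∏ i, u i o') ^ ((1 : ℝ) / n) := by
  intro o'
  haveI : Nonempty (Fin n) := ⟨⟨0, hn⟩⟩
  set L : Finset (Fin n) := Finset.univ.filter (fun i => u i o < u i o') with hLdef
  have hmemL : ∀ i, i ∈ L ↔ u i o < u i o' := by
    intro i; simp [hLdef]
  -- L ≠ univ
  have hLne : L ≠ Finset.univ := by
    intro hEq
    apply hGHR
    refine ⟨Finset.univ, Finset.univ, o', (Finset.univ_nonempty : (Finset.univ : Finset (Fin n)).Nonempty), (Finset.univ_nonempty : (Finset.univ : Finset (Fin n)).Nonempty), ?_, ?_, ?_⟩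
    · intro i _
      have hi : u i o < u i o' := by
        rw [← hmemL]; rw [hEq]; exact Finset.mem_univ i
      have hc : (((Finset.univ : Finset (Fin n)).card : ℝ) / ((Finset.univ ∪ Finset.univ : Finset (Fin n)).card))
          = 1 := by
        rw [Finset.union_self]
        have : (0:ℝ) < (Finset.univ : Finset (Fin n)).card := by
          exact_mod_cast Finset.card_pos.mpr Finset.univ_nonempty
        field_simp
      rw [hc, one_mul]
      exact le_of_lt hi
    · refine ⟨⟨0, hn⟩, Finset.mem_univ _, ?_⟩
      have hi : u ⟨0, hn⟩ o < u ⟨0, hn⟩ o' := by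
        rw [← hmemL]; rw [hEq]; exact Finset.mem_univ _
      have hc : (((Finset.univ : Finset (Fin n)).card : ℝ) / ((Finset.univ ∪ Finset.univ : Finset (Fin n)).card))
          = 1 := by
        rw [Finset.union_self]
        have : (0:ℝ) < (Finset.univ : Finset (Fin n)).card := by
          exact_mod_cast Finset.card_pos.mpr Finset.univ_nonempty
        field_simp
      rw [hc, one_mul]; exact hi
    · intro i hi
      exact absurd (Finset.mem_univ i) (by simpa using hi)
  set k := L.card with hk
  set m := n - k with hm
  have hkn : k ≤ n := by
    have := Finset.card_le_univ L
    simpa [hk] using this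
  have hmk : m + k = n := by omega
  -- hKey
  have hKey : ∀ S : Finset (Fin n), S ⊆ L → S.Nonempty →
      ∃ j ∈ S, ((S.card : ℝ) / (m + S.card)) * u j o' ≤ u j o := by
    intro S hSL hSne
    have hTne : (Lᶜ : Finset (Fin n)).Nonempty := by
      obtain ⟨i, hi⟩ : ∃ i, i ∉ L := by
        by_contra h
        push_neg at h
        exact hLne (Finset.eq_univ_iff_forall.mpr h)
      exact ⟨i, Finset.mem_compl.mpr hi⟩
    have hdisj : Disjoint S (Lᶜ : Finset (Fin n)) :=
      Disjoint.mono_left hSL disjoint_compl_right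
    have hcardU : ((S ∪ Lᶜ).card : ℝ) = (m + S.card : ℝ) := by
      rw [Finset.card_union_of_disjoint hdisj, Finset.card_compl]
      have : Fintype.card (Fin n) = n := Fintype.card_fin n
      rw [this]
      push_cast [hm]
      have : ((n - k : ℕ) : ℝ) = (n : ℝ) - k := by
        push_cast [Nat.cast_sub hkn]; ring
      rw [this]; ring
    by_contra hcon
    push_neg at hcon
    apply hGHR
    refine ⟨S, Lᶜ, o', hSne, hTne, ?_, ?_, ?_⟩
    · intro i hiS
      have := hcon i hiS
      rw [ge_iff_le, hcardU] at *
      push_cast at this ⊢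
      linarith [this]
    · obtain ⟨j, hjS⟩ := hSne
      refine ⟨j, hjS, ?_⟩
      have := hcon j hjS
      rw [hcardU]
      push_cast at this ⊢
      linarith [this]
    · intro i hi
      rw [Finset.mem_union] at hi
      push_neg at hi
      have hiL : i ∈ L := by
        by_contra hiL
        exact hi.2 (Finset.mem_compl.mpr hiL)
      exact le_of_lt ((hmemL i).mp hiL)
  have hprodL := prod_key_ghr (fun i => u i o) (fun i => u i o') (fun i => hu i o)
    (fun i => hu i o') m L hKey L (le_refl L)
  beta_reduce at hprodL
  -- products over complement
  have hprodC : ∏ i ∈ (Lᶜ : Finset (Fin n)), u i o' ≤ ∏ i ∈ Lᶜ, u i o := by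
    apply Finset.prod_le_prod (fun i _ => hu i o')
    intro i hi
    have : i ∉ L := Finset.mem_compl.mp hi
    have := (hmemL i).not.mp this
    linarith [not_lt.mp this]
  -- coefficient equals 1 / choose
  have hchoosepos : (0:ℝ) < (n.choose k : ℝ) := by
    exact_mod_cast Nat.choose_pos hkn
  have hcoef : ((k.factorial * m.factorial : ℝ) / (m + k).factorial)
      = ((n.choose k : ℝ))⁻¹ := by
    rw [hmk]
    have hid : n.choose k * k.factorial * (n - k).factorial = n.factorial :=
      Nat.choose_mul_factorial_mul_factorial hkn
    have hfp : (0:ℝ) < (n.factorial : ℝ) := by exact_mod_cast Nat.factorial_pos n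
    rw [← hid]
    have hmeq : (n - k : ℕ) = m := rfl
    rw [hmeq]
    push_cast
    field_simp
  have hmain : ((n.choose k : ℝ))⁻¹ * ∏ i, u i o' ≤ ∏ i, u i o := by
    rw [← Finset.prod_mul_prod_compl L (fun i => u i o),
        ← Finset.prod_mul_prod_compl L (fun i => u i o')]
    have h1 : ((n.choose k : ℝ))⁻¹ * ((∏ i ∈ L, u i o') * ∏ i ∈ Lᶜ, u i o')
        = (((k.factorial * m.factorial : ℝ) / (m + k).factorial) * ∏ i ∈ L, u i o')
          * ∏ i ∈ Lᶜ, u i o' := by rw [hcoef]; ring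
    rw [h1]
    apply mul_le_mul hprodL hprodC (Finset.prod_nonneg fun i _ => hu i o')
      (Finset.prod_nonneg fun i _ => hu i o)
  -- compare choose n k with middle
  set C : ℝ := (n.choose (n / 2) : ℝ) with hC
  have hC1 : (1:ℝ) ≤ C := by
    have h : 1 ≤ n.choose (n / 2) := Nat.choose_pos (by omega)
    rw [hC]; exact_mod_cast h
  have hC0 : (0:ℝ) ≤ C := by linarith
  have hle : (n.choose k : ℝ) ≤ C := by rw [hC]; exact_mod_cast Nat.choose_le_middle k n
  have hfinal : C⁻¹ * ∏ i, u i o' ≤ ∏ i, u i o := by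
    refine le_trans ?_ hmain
    apply mul_le_mul_of_nonneg_right _ (Finset.prod_nonneg fun i _ => hu i o')
    exact one_div_le_one_div_of_le hchoosepos hle |>.trans_eq (one_div _) |>.trans_eq' (one_div C)
  have hP0 : (0:ℝ) ≤ ∏ i, u i o := Finset.prod_nonneg fun i _ => hu i o
  have hQ0 : (0:ℝ) ≤ ∏ i, u i o' := Finset.prod_nonneg fun i _ => hu i o'
  have hnR : (0:ℝ) ≤ 1 / n := by positivity
  have hnne : (n:ℝ) ≠ 0 := by positivity
  have hexp : (-(1:ℝ) / n) = -((1:ℝ)/n) := by ring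
  have hCpow : C ^ (-(1:ℝ)/n) = (C⁻¹) ^ ((1:ℝ)/n) := by
    rw [hexp, Real.rpow_neg hC0, ← Real.inv_rpow hC0]
  have goal1 : C ^ (-(1:ℝ)/n) * (∏ i, u i o') ^ ((1:ℝ)/n) ≤ (∏ i, u i o) ^ ((1:ℝ)/n) := by
    rw [hCpow, ← Real.mul_rpow (inv_nonneg.mpr hC0) hQ0]
    exact Real.rpow_le_rpow (mul_nonneg (inv_nonneg.mpr hC0) hQ0) hfinal hnR
  refine ⟨goal1, ?_⟩
  have hC2n : C ≤ (2:ℝ) ^ n := by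
    have h2 : n.choose (n / 2) ≤ 2 ^ n := by
      calc n.choose (n / 2) ≤ ∑ i ∈ Finset.range (n+1), n.choose i :=
            Finset.single_le_sum (fun i _ => Nat.zero_le _)
              (Finset.mem_range.mpr (by omega))
        _ = 2 ^ n := Nat.sum_range_choose n
    rw [hC]
    exact_mod_cast h2
  have hhalf : (1/2 : ℝ) ≤ C ^ (-(1:ℝ)/n) := by
    have hCr : C ^ ((1:ℝ)/n) ≤ 2 := by
      calc C ^ ((1:ℝ)/n) ≤ ((2:ℝ) ^ n) ^ ((1:ℝ)/n) := Real.rpow_le_rpow hC0 hC2n hnR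
        _ = 2 := by
            rw [← Real.rpow_natCast 2 n, ← Real.rpow_mul (by norm_num)]
            rw [mul_one_div, div_self hnne, Real.rpow_one]
    have hCrpos : 0 < C ^ ((1:ℝ)/n) := Real.rpow_pos_of_pos (by linarith) _
    rw [hexp, Real.rpow_neg hC0]
    have h := one_div_le_one_div_of_le hCrpos hCr
    rw [← one_div]
    linarith
  calc (1/2 : ℝ) * (∏ i, u i o') ^ ((1:ℝ)/n)
      ≤ C ^ (-(1:ℝ)/n) * (∏ i, u i o') ^ ((1:ℝ)/n) :=
        mul_le_mul_of_nonneg_right hhalf (Real.rpow_nonneg hQ0 _)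
    _ ≤ (∏ i, u i o) ^ ((1:ℝ)/n) := goal1
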